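/- Let Δ be a pure simplicial tree of dimension d on n vertices (every vertex belonging to some facet) which is connected in codimension one. Then the number of facets of Δ equals n − d. -/

import Mathlib

open MvPolynomial

noncomputable section

/-- The depth of `S/I` as a module over `S = K[x_1,…,x_n]` with respect to the graded
maximal ideal `𝔪 = (x_1,…,x_n)`: the supremum of lengths of regular sequences on `S/I`
consisting of elements of `𝔪`. -/
def mDepth (n : ℕ) (K : Type*) [Field K] (I : Ideal (MvPolynomial (Fin n) K)) : ℕ :=
  sSup {k : ℕ | ∃ rs : List (MvPolynomial (Fin n) K), rs.length = k ∧
    (∀ r ∈ rs, r ∈ Ideal.span (Set.range (X : Fin n → MvPolynomial (Fin n) K))) ∧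
    RingTheory.Sequence.IsRegular (MvPolynomial (Fin n) K ⧸ I) rs}

/-- `I` has a constant depth function: `depth S/I^k = depth S/I` for all `k ≥ 1`. -/
def HasConstantDepthFunction (n : ℕ) (K : Type*) [Field K]
    (I : Ideal (MvPolynomial (Fin n) K)) : Prop :=
  ∀ k : ℕ, 1 ≤ k → mDepth n K (I ^ k) = mDepth n K I

/-- The depth of a Noetherian local ring: supremum of lengths of regular sequences
contained in the maximal ideal. -/
def localRingDepth (R : Type*) [CommRing R] [IsLocalRing R] : ℕ :=
  sSup {k : ℕ | ∃ rs : List R, rs.length = k ∧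
    (∀ r ∈ rs, r ∈ IsLocalRing.maximalIdeal R) ∧
    RingTheory.Sequence.IsRegular R rs}

/-- A commutative ring is Cohen–Macaulay if for every prime `p` the localization at `p`
has depth equal to its Krull dimension. -/
def IsCohenMacaulayRing (R : Type*) [CommRing R] : Prop :=
  ∀ (p : Ideal R) [p.IsPrime],
    ringKrullDim (Localization.AtPrime p) =
      (localRingDepth (Localization.AtPrime p) : WithBot ℕ∞)

/-- `I` is a monomial ideal generated by monomials in the variables from `T`. -/
def IsMonomialIdealOn (n : ℕ) (K : Type*) [Field K]
    (I : Ideal (MvPolynomial (Fin n) K)) (T : Set (Fin n)) : Prop :=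
  ∃ A : Set (Fin n →₀ ℕ), (∀ a ∈ A, (a.support : Set (Fin n)) ⊆ T) ∧
    I = Ideal.span ((fun a => (monomial a (1 : K) : MvPolynomial (Fin n) K)) '' A)

/-- `I` is a monomial ideal. -/
def IsMonomialIdeal (n : ℕ) (K : Type*) [Field K]
    (I : Ideal (MvPolynomial (Fin n) K)) : Prop :=
  IsMonomialIdealOn n K I Set.univ

/-- `I` and `J` are monomial ideals generated in disjoint sets of variables. -/
def GeneratedInDisjointVars (n : ℕ) (K : Type*) [Field K]
    (I J : Ideal (MvPolynomial (Fin n) K)) : Prop :=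
  ∃ T₁ T₂ : Set (Fin n), Disjoint T₁ T₂ ∧
    IsMonomialIdealOn n K I T₁ ∧ IsMonomialIdealOn n K J T₂

/-- The ideal of the Rees algebra `R(I)` generated by the image of the graded maximal
ideal `𝔪 ⊆ S`. -/
def fiberIdeal (n : ℕ) (K : Type*) [Field K] (I : Ideal (MvPolynomial (Fin n) K)) :
    Ideal (reesAlgebra I) :=
  Ideal.span ((algebraMap (MvPolynomial (Fin n) K) (reesAlgebra I)) ''
    ((Ideal.span (Set.range (X : Fin n → MvPolynomial (Fin n) K)) :
      Ideal (MvPolynomial (Fin n) K)) : Set (MvPolynomial (Fin n) K)))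

/-- The analytic spread `ℓ(I)`: the Krull dimension of the fiber ring
`R(I)/𝔪R(I)` of the Rees algebra of `I`. -/
def analyticSpread (n : ℕ) (K : Type*) [Field K]
    (I : Ideal (MvPolynomial (Fin n) K)) : ℕ :=
  WithTop.untopD 0 (WithBot.unbotD 0 (ringKrullDim ((reesAlgebra I) ⧸ fiberIdeal n K I)))

/-- The facet ideal of the simplicial complex with facet set `F`. -/
def facetIdeal (n : ℕ) (K : Type*) [Field K] (F : Finset (Finset (Fin n))) :
    Ideal (MvPolynomial (Fin n) K) :=
  Ideal.span ((fun f : Finset (Fin n) => ∏ i ∈ f, (X i : MvPolynomial (Fin n) K)) '' F)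

/-- `f` is a leaf of the simplicial complex with facet set `F`: either `f` is the only
facet, or there is a facet `g ≠ f` (a branch of `f`) with `f ∩ h ⊆ f ∩ g` for every
other facet `h`. -/
def IsLeafOf (n : ℕ) (F : Finset (Finset (Fin n))) (f : Finset (Fin n)) : Prop :=
  F = {f} ∨ ∃ g ∈ F, g ≠ f ∧ ∀ h ∈ F, h ≠ f → f ∩ h ⊆ f ∩ g

/-- The complex with facet set `F` is a simplicial forest: every subcollection of the
facets (viewed as facets of a subcomplex) has a leaf. -/
def IsSimplicialForest (n : ℕ) (F : Finset (Finset (Fin n))) : Prop :=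
  ∀ F' ⊆ F, F'.Nonempty → ∃ f ∈ F', IsLeafOf n F' f

/-- The complex with facet set `F` is connected: any two facets are joined by a chain
of facets with consecutive nonempty intersections. -/
def FacetConnected (n : ℕ) (F : Finset (Finset (Fin n))) : Prop :=
  ∀ f ∈ F, ∀ g ∈ F,
    Relation.ReflTransGen (fun a b => a ∈ F ∧ b ∈ F ∧ (a ∩ b).Nonempty) f g

/-- The pure `d`-dimensional complex with facet set `F` is connected in codimension one:
any two facets are joined by a chain of facets in which consecutive facets intersect in
codimension one (i.e. in `d` vertices, the facets having `d+1` vertices each). -/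
def ConnectedInCodimOne (n d : ℕ) (F : Finset (Finset (Fin n))) : Prop :=
  ∀ f ∈ F, ∀ g ∈ F,
    Relation.ReflTransGen (fun a b => a ∈ F ∧ b ∈ F ∧ (a ∩ b).card = d) f g

lemma inter_card_le_aux {n d : ℕ} {f g : Finset (Fin n)}
    (hfc : f.card = d + 1) (hgc : g.card = d + 1) (hne : g ≠ f) :
    (f ∩ g).card ≤ d := by
  by_contra h
  push_neg at h
  have hsub : f ∩ g ⊆ f := Finset.inter_subset_left
  have : f ∩ g = f := Finset.eq_of_subset_of_card_le hsub (by omega)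
  have hfg : f ⊆ g := by rw [← this]; exact Finset.inter_subset_right
  exact hne (Finset.eq_of_subset_of_card_le hfg (by omega)).symm

/-- Helper: from the branch `g` one can reach any facet `a ≠ f` intersecting `f`
in codimension one, within the complex with `f` removed. -/
lemma branch_step {n d : ℕ} {F : Finset (Finset (Fin n))}
    (hpure : ∀ f ∈ F, f.card = d + 1)
    {f g : Finset (Fin n)} (hf : f ∈ F) (hg : g ∈ F) (hgf : g ≠ f)
    (hleaf : ∀ h ∈ F, h ≠ f → f ∩ h ⊆ f ∩ g)
    {a : Finset (Fin n)} (ha : a ∈ F) (hane : a ≠ f) (hcard : (f ∩ a).card = d) :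
    Relation.ReflTransGen
      (fun x y => x ∈ F.erase f ∧ y ∈ F.erase f ∧ (x ∩ y).card = d) g a := by
  have hfa : f ∩ a ⊆ f ∩ g := hleaf a ha hane
  have hle : (f ∩ g).card ≤ d :=
    inter_card_le_aux (hpure f hf) (hpure g hg) hgf
  have heq : f ∩ a = f ∩ g := Finset.eq_of_subset_of_card_le hfa (by rw [hcard]; exact hle)
  have hsub : f ∩ g ⊆ g ∩ a := by
    intro x hx
    exact Finset.mem_inter.2 ⟨(Finset.mem_inter.1 hx).2,
      (Finset.mem_inter.1 (heq ▸ hx)).2⟩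
  have hdle : d ≤ (g ∩ a).card := by
    calc d = (f ∩ g).card := by rw [← heq, hcard]
    _ ≤ (g ∩ a).card := Finset.card_le_card hsub
  rcases eq_or_lt_of_le hdle with h | h
  · exact Relation.ReflTransGen.single
      ⟨Finset.mem_erase.2 ⟨hgf, hg⟩, Finset.mem_erase.2 ⟨hane, ha⟩, h.symm⟩
  · -- then g ∩ a has card ≥ d+1 = card g, so g = a
    have hga : g ∩ a ⊆ g := Finset.inter_subset_left
    have : g ∩ a = g := Finset.eq_of_subset_of_card_le hga
      (by have := hpure g hg; omega)
    have hsub2 : g ⊆ a := by rw [← this]; exact Finset.inter_subset_right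
    have : g = a := Finset.eq_of_subset_of_card_le hsub2
      (by rw [hpure g hg, hpure a ha])
    subst this
    exact Relation.ReflTransGen.refl

/-- Detour lemma: chains in `F` avoiding `f` at the endpoints can be rerouted
through the branch `g` inside `F.erase f`. -/
lemma detour {n d : ℕ} {F : Finset (Finset (Fin n))}
    (hpure : ∀ f ∈ F, f.card = d + 1)
    {f g : Finset (Fin n)} (hf : f ∈ F) (hg : g ∈ F) (hgf : g ≠ f)
    (hleaf : ∀ h ∈ F, h ≠ f → f ∩ h ⊆ f ∩ g)
    {y : Finset (Fin n)} (hy : y ≠ f) {a : Finset (Fin n)}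
    (hchain : Relation.ReflTransGen (fun x y => x ∈ F ∧ y ∈ F ∧ (x ∩ y).card = d) a y) :
    Relation.ReflTransGen
      (fun x y => x ∈ F.erase f ∧ y ∈ F.erase f ∧ (x ∩ y).card = d)
      (if a = f then g else a) y := by
  induction hchain using Relation.ReflTransGen.head_induction_on with
  | refl => rw [if_neg hy]
  | head hstep hch ih =>
    rename_i u c
    obtain ⟨huF, hcF, hcard⟩ := hstep
    by_cases huf : u = f
    · rw [if_pos huf]
      have hcne : c ≠ f := by
        rintro rfl
        rw [huf, Finset.inter_self] at hcard
        have := hpure c hcF; omega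
      rw [if_neg hcne] at ih
      rw [huf] at hcard
      exact (branch_step hpure hf hg hgf hleaf hcF hcne hcard).trans ih
    · rw [if_neg huf]
      by_cases hcf : c = f
      · rw [if_pos hcf] at ih
        have hcard' : (f ∩ u).card = d := by
          rw [← hcf, Finset.inter_comm]; exact hcard
        have step : Relation.ReflTransGen
            (fun x y => x ∈ F.erase f ∧ y ∈ F.erase f ∧ (x ∩ y).card = d) g u :=
          branch_step hpure hf hg hgf hleaf huF huf hcard'
        have hsym : ∀ x z, (x ∈ F.erase f ∧ z ∈ F.erase f ∧ (x ∩ z).card = d) →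
            (z ∈ F.erase f ∧ x ∈ F.erase f ∧ (z ∩ x).card = d) := by
          rintro x z ⟨h1, h2, h3⟩
          exact ⟨h2, h1, by rwa [Finset.inter_comm]⟩
        have rev : Relation.ReflTransGen
            (fun x y => x ∈ F.erase f ∧ y ∈ F.erase f ∧ (x ∩ y).card = d) u g := by
          clear ih hcard' hcard huf huF
          induction step with
          | refl => exact Relation.ReflTransGen.refl
          | tail h1 h2 ih2 => exact Relation.ReflTransGen.head (hsym _ _ h2) ih2
        exact rev.trans ih
      · rw [if_neg hcf] at ih
        exact Relation.ReflTransGen.head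
          ⟨Finset.mem_erase.2 ⟨huf, huF⟩, Finset.mem_erase.2 ⟨hcf, hcF⟩, hcard⟩ ih

/-- The union of the facets of a nonempty pure simplicial forest connected in
codimension one has `|F| + d` vertices. -/
lemma sup_card_of_forest {n d : ℕ} :
    ∀ F : Finset (Finset (Fin n)), F.Nonempty →
    (∀ f ∈ F, f.card = d + 1) →
    IsSimplicialForest n F →
    ConnectedInCodimOne n d F →
    (F.sup id).card = F.card + d := by
  intro F
  induction F using Finset.strongInductionOn with
  | _ F ih =>
  intro hne hpure hforest hcodim
  obtain ⟨f, hf, hleaf⟩ := hforest F (subset_refl F) hne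
  rcases hleaf with hsingle | ⟨g, hg, hgf, hleaf⟩
  · subst hsingle
    simp [hpure f hf, Nat.add_comm]
  · -- compute |f ∩ g| = d using connectivity
    have hfg_le : (f ∩ g).card ≤ d :=
      inter_card_le_aux (hpure f hf) (hpure g hg) hgf
    have hfgcard : (f ∩ g).card = d := by
      have hchain := hcodim f hf g hg
      rcases hchain.cases_head with heq | ⟨b, ⟨_, hbF, hcard⟩, _⟩
      · exact absurd heq.symm hgf
      · have hbne : b ≠ f := by
          rintro rfl
          rw [Finset.inter_self] at hcard
          have := hpure b hbF; omega
        have := Finset.card_le_card (hleaf b hbF hbne)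
        omega
    set F' := F.erase f with hF'
    have hgF' : g ∈ F' := Finset.mem_erase.2 ⟨hgf, hg⟩
    have hF'ss : F' ⊂ F := Finset.erase_ssubset hf
    have hpure' : ∀ h ∈ F', h.card = d + 1 := fun h hh => hpure h (Finset.mem_of_mem_erase hh)
    have hforest' : IsSimplicialForest n F' :=
      fun G hG hGne => hforest G (hG.trans (Finset.erase_subset _ _)) hGne
    have hcodim' : ConnectedInCodimOne n d F' := by
      intro x hx y hy
      have hxne : x ≠ f := (Finset.mem_erase.1 hx).1
      have hyne : y ≠ f := (Finset.mem_erase.1 hy).1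
      have := detour hpure hf hg hgf hleaf hyne
        (hcodim x (Finset.mem_of_mem_erase hx) y (Finset.mem_of_mem_erase hy))
      rwa [if_neg hxne] at this
    have hIH : (F'.sup id).card = F'.card + d :=
      ih F' hF'ss ⟨g, hgF'⟩ hpure' hforest' hcodim'
    -- the unique free vertex of f
    have hsd : (f \ g).card = 1 := by
      have := Finset.card_sdiff_add_card_inter f g
      have := hpure f hf
      omega
    obtain ⟨v, hv⟩ := Finset.card_eq_one.1 hsd
    have hvf : v ∈ f := by
      have : v ∈ f \ g := hv ▸ Finset.mem_singleton_self v
      exact (Finset.mem_sdiff.1 this).1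
    have hvg : v ∉ g := by
      have : v ∈ f \ g := hv ▸ Finset.mem_singleton_self v
      exact (Finset.mem_sdiff.1 this).2
    -- v is not in any other facet
    have hvF' : v ∉ F'.sup id := by
      intro hmem
      obtain ⟨h, hh, hvh⟩ := Finset.mem_sup.1 hmem
      have hhne : h ≠ f := (Finset.mem_erase.1 hh).1
      have : v ∈ f ∩ g := hleaf h (Finset.mem_of_mem_erase hh) hhne
        (Finset.mem_inter.2 ⟨hvf, hvh⟩)
      exact hvg (Finset.mem_inter.1 this).2
    -- F.sup id = f ∪ F'.sup id
    have hsup : F.sup id = f ∪ F'.sup id := by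
      conv_lhs => rw [← Finset.insert_erase hf]
      rw [Finset.sup_insert]
      rfl
    have hinter : f ∩ F'.sup id = f ∩ g := by
      apply Finset.Subset.antisymm
      · intro x hx
        obtain ⟨hxf, hxS⟩ := Finset.mem_inter.1 hx
        obtain ⟨h, hh, hxh⟩ := Finset.mem_sup.1 hxS
        exact hleaf h (Finset.mem_of_mem_erase hh) (Finset.mem_erase.1 hh).1
          (Finset.mem_inter.2 ⟨hxf, hxh⟩)
      · intro x hx
        obtain ⟨hxf, hxg⟩ := Finset.mem_inter.1 hx
        exact Finset.mem_inter.2 ⟨hxf, Finset.mem_sup.2 ⟨g, hgF', hxg⟩⟩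
    have hcardF : F.card = F'.card + 1 := by
      rw [hF', Finset.card_erase_of_mem hf]
      have : 0 < F.card := Finset.card_pos.2 hne
      omega
    have hunion := Finset.card_union_add_card_inter f (F'.sup id)
    rw [hinter, hfgcard] at hunion
    rw [hsup]
    have := hpure f hf
    omega

/-- Let `Δ` be a pure simplicial tree of dimension `d` on `n` vertices
(every vertex belonging to some facet) which is connected in codimension one. Then the
number of facets of `Δ` equals `n - d`. -/
theorem tree_card_facets (n d : ℕ) (F : Finset (Finset (Fin n)))
    (hpure : ∀ f ∈ F, f.card = d + 1)
    (hvert : ∀ i : Fin n, ∃ f ∈ F, i ∈ f)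
    (hforest : IsSimplicialForest n F)
    (hconn : FacetConnected n F)
    (hcodim : ConnectedInCodimOne n d F) :
    F.card = n - d := by
  rcases F.eq_empty_or_nonempty with rfl | hne
  · -- no facets, so no vertices: n = 0
    have hn : n = 0 := by
      by_contra h
      obtain ⟨f, hf, -⟩ := hvert ⟨0, Nat.pos_of_ne_zero h⟩
      exact absurd hf (Finset.notMem_empty f)
    simp [hn]
  · have hsup : F.sup id = Finset.univ := by
      apply Finset.eq_univ_of_forall
      intro i
      obtain ⟨f, hf, hif⟩ := hvert i
      exact Finset.mem_sup.2 ⟨f, hf, hif⟩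
    have := sup_card_of_forest F hne hpure hforest hcodim
    rw [hsup, Finset.card_univ, Fintype.card_fin] at this
    omega

end
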